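/- Let X be a deck of n = a+b+c cards (a,b,c ≥ 1) and let 𝒜 be a nonempty announcement that is informative for Bob and satisfies the weak 1-security condition. Then c < b. -/

import Mathlib

open Finset

/-- Theorem: if a nonempty announcement is informative for Bob and weakly
1-secure against Cathy, then `c < b`. -/
theorem stmt_7 {α : Type*} [DecidableEq α] (X : Finset α) (a b c : ℕ)
    (ha : 1 ≤ a) (hb : 1 ≤ b) (hc : 1 ≤ c)
    (hX : X.card = a + b + c)
    (𝒜 : Finset (Finset α))
    (hhands : ∀ H ∈ 𝒜, H ⊆ X ∧ H.card = a)
    (hne : 𝒜.Nonempty)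
    (hinf : ∀ HB ⊆ X, HB.card = b →
      ∀ H ∈ 𝒜, ∀ H' ∈ 𝒜, Disjoint H HB → Disjoint H' HB → H = H')
    (hsec : ∀ HC ⊆ X, HC.card = c →
      (𝒜.filter fun H => Disjoint H HC).Nonempty →
      ∀ x ∈ X \ HC,
        1 ≤ (((𝒜.filter fun H => Disjoint H HC)).filter fun H => x ∈ H).card ∧
        (((𝒜.filter fun H => Disjoint H HC)).filter fun H => x ∈ H).card ≤
          (𝒜.filter fun H => Disjoint H HC).card - 1) :
    c < b := by
  by_contra hlt
  push_neg at hlt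
  -- hlt : b ≤ c
  obtain ⟨H0, hH0⟩ := hne
  obtain ⟨hH0X, hH0card⟩ := hhands H0 hH0
  have hcard : (X \ H0).card = b + c := by
    rw [card_sdiff_of_subset hH0X, hX, hH0card]; omega
  obtain ⟨HC, hHCsub, hHCcard⟩ : ∃ HC ⊆ X \ H0, HC.card = c :=
    exists_subset_card_eq (by omega)
  have hHCX : HC ⊆ X := hHCsub.trans (sdiff_subset)
  have hdisj : Disjoint H0 HC :=
    disjoint_of_subset_right hHCsub sdiff_disjoint.symm
  have hH0mem : H0 ∈ 𝒜.filter fun H => Disjoint H HC :=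
    mem_filter.mpr ⟨hH0, hdisj⟩
  have hPne : (𝒜.filter fun H => Disjoint H HC).Nonempty := ⟨H0, hH0mem⟩
  -- pick x ∈ X \ HC
  have hx : (X \ HC).Nonempty := by
    rw [← card_pos, card_sdiff_of_subset hHCX, hX, hHCcard]; omega
  obtain ⟨x, hxmem⟩ := hx
  obtain ⟨h1, h2⟩ := hsec HC hHCX hHCcard hPne x hxmem
  have hP2 : 2 ≤ (𝒜.filter fun H => Disjoint H HC).card := by omega
  -- get two distinct hands disjoint from HC
  obtain ⟨H1, hH1, H2, hH2, hne12⟩ := one_lt_card.mp hP2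
  rw [mem_filter] at hH1 hH2
  -- pick HB ⊆ HC of size b
  obtain ⟨HB, hHBsub, hHBcard⟩ : ∃ HB ⊆ HC, HB.card = b :=
    exists_subset_card_eq (by omega)
  exact hne12 (hinf HB (hHBsub.trans hHCX) hHBcard H1 hH1.1 H2 hH2.1
    (hH1.2.mono_right hHBsub) (hH2.2.mono_right hHBsub))
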